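/- If a probability distribution P over variables V satisfies, for a DAG G with topological ordering ≺, the local conditions X ⫫ V^{≤X} \ Pa(X) ∪ {X} | Pa(X) for every vertex X, then P factorizes as P(v) = ∏_{X ∈ V} P(x | pa(X)). -/

import Mathlib

/-- A mixed graph: directed edges and (symmetric) bidirected edges. -/
structure MixedGraph (V : Type) where
  dir : V → V → Prop
  bi : V → V → Prop
  bi_symm : ∀ a b, bi a b → bi b a

namespace MixedGraph

variable {V : Type}

/-- `G.anc x y` : `x` is an ancestor of `y` (directed path, possibly trivial). -/
def anc (G : MixedGraph V) : V → V → Prop := Relation.ReflTransGen G.dir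

/-- Ancestors of a set (including the set itself). -/
def An (G : MixedGraph V) (S : Set V) : Set V := {v | ∃ s ∈ S, G.anc v s}

/-- A set is ancestral if it contains all ancestors of its elements. -/
def Ancestral (G : MixedGraph V) (S : Set V) : Prop := G.An S = S

/-- Descendants of a set (including the set itself). -/
def De (G : MixedGraph V) (S : Set V) : Set V := {v | ∃ s ∈ S, G.anc s v}

/-- `Pa(C)`: `C` together with the directed parents of members of `C`. -/
def Pa (G : MixedGraph V) (C : Set V) : Set V := C ∪ {p | ∃ c ∈ C, G.dir p c}

/-- `Spo(C)`: vertices joined by a bidirected edge to some vertex of `C`. -/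
def Spo (G : MixedGraph V) (C : Set V) : Set V := {y | ∃ c ∈ C, G.bi y c}

/-- Connectivity by a path of bidirected edges lying inside `S`. -/
def biConn (G : MixedGraph V) (S : Set V) : V → V → Prop :=
  Relation.ReflTransGen (fun a b => G.bi a b ∧ a ∈ S ∧ b ∈ S)

/-- The c-component of `x` in the induced subgraph on `S`. -/
def cc (G : MixedGraph V) (S : Set V) (x : V) : Set V := {y | G.biConn S x y}

/-- The ordering on `V` is a topological ordering of the directed part of `G`. -/
def TopoOrder (G : MixedGraph V) [LinearOrder V] : Prop := ∀ a b, G.dir a b → a < b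

/-- Ancestral c-component relative to `X` (w.r.t. the linear order on `V`). -/
def IsACC (G : MixedGraph V) [LinearOrder V] (X : V) (C : Set V) : Prop :=
  ∃ S : Set V, G.Ancestral S ∧ S ⊆ {y | y ≤ X} ∧ X ∈ S ∧ G.cc S X = C

/-- `S⁺ = V^{≤X} \ De(Spo(C) \ Pa(C))`. -/
def Splus (G : MixedGraph V) [LinearOrder V] (X : V) (C : Set V) : Set V :=
  {y | y ≤ X} \ G.De (G.Spo C \ G.Pa C)

end MixedGraph

/-- Two assignments agree on a set of variables. -/
def agreeOn {V : Type} (f g : V → ℕ) (A : Set V) : Prop := ∀ v ∈ A, f v = g v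

/-- Probability of an event under a discrete distribution. -/
noncomputable def prS {V : Type} (p : PMF (V → ℕ)) (E : Set (V → ℕ)) : ENNReal :=
  ∑' g, E.indicator (fun h => p h) g

/-- Conditional independence `A ⫫ B | S` in `p`:
`P(a,s) P(b,s) = P(a,b,s) P(s)` for every assignment. -/
def CI {V : Type} (p : PMF (V → ℕ)) (A B S : Set V) : Prop :=
  ∀ f : V → ℕ,
    prS p {g | agreeOn f g (A ∪ S)} * prS p {g | agreeOn f g (B ∪ S)} =
    prS p {g | agreeOn f g (A ∪ B ∪ S)} * prS p {g | agreeOn f g S}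

variable {V : Type}

lemma my_prS_mono (p : PMF (V → ℕ)) {E F : Set (V → ℕ)} (h : E ⊆ F) :
    prS p E ≤ prS p F := by
  refine ENNReal.tsum_le_tsum fun g => ?_
  by_cases hg : g ∈ E
  · rw [Set.indicator_of_mem hg, Set.indicator_of_mem (h hg)]
  · rw [Set.indicator_of_notMem hg]; exact zero_le

lemma my_prS_univ (p : PMF (V → ℕ)) : prS p Set.univ = 1 := by
  simp [prS, Set.indicator_univ, PMF.tsum_coe]

lemma my_prS_le_one (p : PMF (V → ℕ)) (E : Set (V → ℕ)) : prS p E ≤ 1 := by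
  rw [← my_prS_univ p]; exact my_prS_mono p (Set.subset_univ E)

lemma agree_mono (f : V → ℕ) {A B : Set V} (h : A ⊆ B) :
    {g | agreeOn f g B} ⊆ {g | agreeOn f g A} := fun g hg v hv => hg v (h hv)

lemma my_key [Fintype V] [LinearOrder V] (G : MixedGraph V) (htopo : G.TopoOrder)
    (p : PMF (V → ℕ))
    (hlocal : ∀ X : V,
      CI p {X} ({y | y ≤ X} \ ({q | G.dir q X} ∪ {X})) {q | G.dir q X})
    (f : V → ℕ) :
    ∀ X : V, prS p {g | agreeOn f g {y | y ≤ X}} =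
      ∏ Y ∈ Finset.univ.filter (· ≤ X),
        prS p {g | agreeOn f g ({Y} ∪ {q | G.dir q Y})} /
          prS p {g | agreeOn f g {q | G.dir q Y}} := by
  intro X
  induction X using WellFoundedLT.induction with
  | _ X ih =>
    have hPa : {q | G.dir q X} ⊆ {y | y < X} := fun q hq => htopo q X hq
    -- step identity from CI
    have hCI := hlocal X f
    have hset1 : ({X} : Set V) ∪ ({y | y ≤ X} \ ({q | G.dir q X} ∪ {X})) ∪ {q | G.dir q X}
        = {y | y ≤ X} := by
      ext v
      simp only [Set.mem_union, Set.mem_diff, Set.mem_singleton_iff, Set.mem_setOf_eq]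
      constructor
      · rintro ((rfl | ⟨h, _⟩) | h)
        · exact le_refl _
        · exact h
        · exact le_of_lt (hPa h)
      · intro h
        by_cases h1 : v = X
        · exact Or.inl (Or.inl h1)
        · by_cases h2 : G.dir v X
          · exact Or.inr h2
          · exact Or.inl (Or.inr ⟨h, by simp [h1, h2]⟩)
    have hset2 : ({y | y ≤ X} \ ({q | G.dir q X} ∪ {X})) ∪ {q | G.dir q X}
        = {y | y < X} := by
      ext v
      simp only [Set.mem_union, Set.mem_diff, Set.mem_singleton_iff, Set.mem_setOf_eq]
      constructor
      · rintro (⟨h, h'⟩ | h)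
        · exact lt_of_le_of_ne h (by tauto)
        · exact hPa h
      · intro h
        by_cases h2 : G.dir v X
        · exact Or.inr h2
        · exact Or.inl ⟨le_of_lt h, by simp [h2, ne_of_lt h]⟩
    rw [hset1, hset2] at hCI
    -- hCI : prS ({X} ∪ Pa) * prS {y<X} = prS {y≤X} * prS Pa
    have hstep : prS p {g | agreeOn f g {y | y ≤ X}} =
        prS p {g | agreeOn f g {y | y < X}} *
          (prS p {g | agreeOn f g ({X} ∪ {q | G.dir q X})} /
            prS p {g | agreeOn f g {q | G.dir q X}}) := by
      by_cases h0 : prS p {g | agreeOn f g {q | G.dir q X}} = 0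
      · have hle : prS p {g | agreeOn f g {y | y ≤ X}} ≤
            prS p {g | agreeOn f g {q | G.dir q X}} :=
          my_prS_mono p (agree_mono f (fun q hq => le_of_lt (hPa hq)))
        have hle2 : prS p {g | agreeOn f g ({X} ∪ {q | G.dir q X})} ≤
            prS p {g | agreeOn f g {q | G.dir q X}} :=
          my_prS_mono p (agree_mono f Set.subset_union_right)
        rw [h0] at hle hle2
        rw [le_zero_iff.mp hle, le_zero_iff.mp hle2, h0]
        simp
      · have hfin : prS p {g | agreeOn f g {q | G.dir q X}} ≠ ⊤ :=
          ne_top_of_le_ne_top ENNReal.one_ne_top (my_prS_le_one p _)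
        have h2 := congrArg (· / prS p {g | agreeOn f g {q | G.dir q X}}) hCI
        conv at h2 => rhs; rw [mul_div_assoc, ENNReal.div_self h0 hfin, mul_one]
        rw [← h2, ← mul_div_assoc, mul_comm, mul_div_assoc]
    have hXnot : X ∉ Finset.univ.filter (· < X) := by simp
    have hfilter : Finset.univ.filter (· ≤ X) = insert X (Finset.univ.filter (· < X)) := by
      ext v
      simp only [Finset.mem_filter, Finset.mem_univ, true_and, Finset.mem_insert]
      rw [le_iff_lt_or_eq]; tauto
    rw [hfilter, Finset.prod_insert hXnot, hstep, mul_comm]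
    congr 1
    by_cases hne : (Finset.univ.filter (· < X)).Nonempty
    · set W := (Finset.univ.filter (· < X)).max' hne with hWdef
      have hW : W < X := by
        have h := (Finset.univ.filter (· < X)).max'_mem hne
        rw [Finset.mem_filter] at h
        exact h.2
      have hset3 : {y : V | y < X} = {y | y ≤ W} := by
        ext v
        simp only [Set.mem_setOf_eq]
        constructor
        · intro h; exact Finset.le_max' _ v (by simpa using h)
        · intro h; exact lt_of_le_of_lt h hW
      have hfilter2 : Finset.univ.filter (· < X) = Finset.univ.filter (· ≤ W) := by
        ext v
        simp only [Finset.mem_filter, Finset.mem_univ, true_and]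
        constructor
        · intro h; exact Finset.le_max' _ v (by simpa using h)
        · intro h; exact lt_of_le_of_lt h hW
      rw [hset3, hfilter2]
      exact ih W hW
    · have hempty : {y : V | y < X} = ∅ := by
        ext v
        simp only [Set.mem_setOf_eq, Set.mem_empty_iff_false, iff_false]
        intro h
        exact hne ⟨v, by simpa using h⟩
      have hfe : Finset.univ.filter (· < X) = ∅ := Finset.not_nonempty_iff_eq_empty.mp hne
      rw [hempty, hfe]
      have : {g : V → ℕ | agreeOn f g ∅} = Set.univ := by
        ext g; simp [agreeOn]
      rw [this, my_prS_univ]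
      simp


/-- If `P` satisfies the local conditions `X ⫫ V^{≤X} \ (Pa(X) ∪ {X}) | Pa(X)`
for every vertex `X` of a DAG, then `P` factorizes as `P(v) = ∏_X P(x | pa(X))`. -/
theorem stmt19 {V : Type} [Fintype V] [LinearOrder V] (G : MixedGraph V)
    (hMarkov : ∀ a b : V, ¬ G.bi a b) (htopo : G.TopoOrder)
    (p : PMF (V → ℕ))
    (hlocal : ∀ X : V,
      CI p {X} ({y | y ≤ X} \ ({q | G.dir q X} ∪ {X})) {q | G.dir q X}) :
    ∀ f : V → ℕ,
      prS p {g | g = f} =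
        ∏ X : V,
          prS p {g | g X = f X ∧ ∀ v : V, G.dir v X → g v = f v} /
            prS p {g | ∀ v : V, G.dir v X → g v = f v} := by
  intro f
  have hev1 : ∀ X : V, {g | g X = f X ∧ ∀ v : V, G.dir v X → g v = f v} =
      {g | agreeOn f g ({X} ∪ {q | G.dir q X})} := by
    intro X; ext g
    simp only [agreeOn, Set.union_singleton, Set.mem_setOf_eq, Set.mem_insert_iff]
    constructor
    · rintro ⟨h1, h2⟩ v (rfl | hv)
      · exact h1.symm
      · exact (h2 v hv).symm
    · intro h; exact ⟨(h X (Or.inl rfl)).symm, fun v hv => (h v (Or.inr hv)).symm⟩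
  have hev2 : ∀ X : V, {g | ∀ v : V, G.dir v X → g v = f v} =
      {g | agreeOn f g {q | G.dir q X}} := by
    intro X; ext g
    simp only [agreeOn, Set.mem_setOf_eq]
    exact ⟨fun h v hv => (h v hv).symm, fun h v hv => (h v hv).symm⟩
  simp only [hev1, hev2]
  rcases isEmpty_or_nonempty V with hV | hV
  · have h1 : {g : V → ℕ | g = f} = Set.univ := by
      ext g
      simp only [Set.mem_setOf_eq, Set.mem_univ, iff_true]
      funext v
      exact (hV.false v).elim
    rw [h1, my_prS_univ]
    rw [Finset.univ_eq_empty, Finset.prod_empty]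
  · have hTne : (Finset.univ : Finset V).Nonempty := Finset.univ_nonempty
    set T := Finset.univ.max' hTne with hT
    have huniv : {y : V | y ≤ T} = Set.univ := by
      ext v
      simp only [Set.mem_setOf_eq, Set.mem_univ, iff_true]
      exact Finset.le_max' _ v (Finset.mem_univ v)
    have hall : Finset.univ.filter (· ≤ T) = (Finset.univ : Finset V) := by
      ext v
      simp only [Finset.mem_filter, Finset.mem_univ, true_and, iff_true]
      exact Finset.le_max' _ v (Finset.mem_univ v)
    have hk := my_key G htopo p hlocal f T
    rw [huniv, hall] at hk
    have h1 : {g : V → ℕ | g = f} = {g | agreeOn f g Set.univ} := by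
      ext g
      simp only [Set.mem_setOf_eq, agreeOn, Set.mem_univ, forall_true_left, true_implies]
      constructor
      · rintro rfl; intro v; rfl
      · intro h; funext v; exact (h v).symm
    rw [h1, hk]
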